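/- Let X be Tychonoff. If X satisfies S_fin(Γ_F, Ω^gr), then C_p(X) satisfies S_fin(Γ_𝟎, wΓ_𝟎). -/

import Mathlib

open Set Filter Topology

/-- A family is a γ-cover: it is infinite and every point belongs to all but
finitely many members. -/
def IsGammaCover {X : Type*} (𝒰 : Set (Set X)) : Prop :=
  𝒰.Infinite ∧ ∀ x : X, {V ∈ 𝒰 | x ∉ V}.Finite

/-- The Hurewicz property `U_fin(𝒪, Γ)`. -/
def Hurewicz (Y : Type*) [TopologicalSpace Y] : Prop :=
  ∀ 𝒰 : ℕ → Set (Set Y),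
    (∀ n, (∀ V ∈ 𝒰 n, IsOpen V) ∧ ⋃₀ 𝒰 n = Set.univ) →
    ∃ 𝒱 : ℕ → Set (Set Y), (∀ n, 𝒱 n ⊆ 𝒰 n ∧ (𝒱 n).Finite) ∧
      ∀ y : Y, ∀ᶠ n in Filter.atTop, y ∈ ⋃₀ 𝒱 n

/-- A space is projectively Hurewicz if every separable metrizable continuous
image of it is Hurewicz. -/
def ProjHurewicz (X : Type*) [TopologicalSpace X] : Prop :=
  ∀ (Y : Type) [TopologicalSpace Y],
    TopologicalSpace.MetrizableSpace Y → TopologicalSpace.SeparableSpace Y →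
    ∀ f : X → Y, Continuous f → Function.Surjective f → Hurewicz Y

/-- A zero-set: the preimage of `{0}` of a continuous real-valued function. -/
def IsZeroSet {X : Type*} [TopologicalSpace X] (F : Set X) : Prop :=
  ∃ f : X → ℝ, Continuous f ∧ F = f ⁻¹' {0}

/-- A cozero set: the complement of a zero-set. -/
def IsCozero {X : Type*} [TopologicalSpace X] (U : Set X) : Prop :=
  ∃ f : X → ℝ, Continuous f ∧ U = f ⁻¹' {0}ᶜ

/-- A (countable) cozero γ-cover which is γ_F-shrinkable: it admits a
γ-cover by zero-sets shrinking it. -/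
def GammaFShrinkable {X : Type*} [TopologicalSpace X] (𝒰 : Set (Set X)) : Prop :=
  𝒰.Countable ∧ (∀ V ∈ 𝒰, IsCozero V) ∧ IsGammaCover 𝒰 ∧
    ∃ F : Set X → Set X, (∀ V ∈ 𝒰, IsZeroSet (F V) ∧ F V ⊆ V) ∧
      (F '' 𝒰).Infinite ∧ ∀ x : X, {V ∈ 𝒰 | x ∉ F V}.Finite

/-- An ω-groupable open cover: an open cover admitting a partition into finite
parts such that every finite set is contained in a member of all but finitely
many parts. -/
def OmegaGroupable {X : Type*} [TopologicalSpace X] (𝒲 : Set (Set X)) : Prop :=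
  (∀ V ∈ 𝒲, IsOpen V) ∧ ⋃₀ 𝒲 = Set.univ ∧
    ∃ P : ℕ → Set (Set X), (∀ n, (P n).Finite ∧ (P n).Nonempty) ∧
      (⋃ n, P n) = 𝒲 ∧ (∀ m n, m ≠ n → Disjoint (P m) (P n)) ∧
      ∀ F : Set X, F.Finite → ∀ᶠ n in Filter.atTop, ∃ U ∈ P n, F ⊆ U

/-- `C_p(X)`: continuous real-valued functions with the topology of pointwise
convergence (subspace of the product `X → ℝ`). -/
abbrev Cp (X : Type*) [TopologicalSpace X] : Type _ :=
  {f : X → ℝ // Continuous f}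

/-- The constant zero function in `C_p(X)`. -/
def zeroCp (X : Type*) [TopologicalSpace X] : Cp X :=
  ⟨fun _ => 0, continuous_const⟩

/-- `A ∈ Γ_g`: `A` is infinite, `g ∉ A` and `A` converges to `g`. -/
def GammaAt {X : Type*} [TopologicalSpace X] (g : Cp X) (A : Set (Cp X)) : Prop :=
  A.Infinite ∧ g ∉ A ∧ ∀ W ∈ 𝓝 g, (A \ W).Finite

/-- `B ∈ wΓ_g`: `B` admits a partition into finite parts weakly converging
to `g`. -/
def WGammaAt {X : Type*} [TopologicalSpace X] (g : Cp X) (B : Set (Cp X)) : Prop :=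
  ∃ S : ℕ → Set (Cp X), (∀ n, (S n).Finite ∧ (S n).Nonempty) ∧
    (⋃ n, S n) = B ∧ (∀ m n, m ≠ n → Disjoint (S m) (S n)) ∧
    ∀ W ∈ 𝓝 g, ∃ s : ℕ → Cp X, (∀ n, s n ∈ S n) ∧ ∀ᶠ n in Filter.atTop, s n ∈ W

/-- The selection principle `S_fin(Γ_g, wΓ_g)` for `C_p(X)` at the point `g`. -/
def SfinGammaWGamma {X : Type*} [TopologicalSpace X] (g : Cp X) : Prop :=
  ∀ A : ℕ → Set (Cp X), (∀ n, GammaAt g (A n)) →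
    ∃ B : ℕ → Set (Cp X), (∀ n, B n ⊆ A n ∧ (B n).Finite) ∧ WGammaAt g (⋃ n, B n)

/-- The selection principle `S_fin(Γ_F, Ω^gr)` for a space `X`. -/
def SfinGammaFOmegaGr (X : Type*) [TopologicalSpace X] : Prop :=
  ∀ 𝒰 : ℕ → Set (Set X), (∀ n, GammaFShrinkable (𝒰 n)) →
    ∃ 𝒱 : ℕ → Set (Set X), (∀ n, 𝒱 n ⊆ 𝒰 n ∧ (𝒱 n).Finite) ∧
      OmegaGroupable (⋃ n, 𝒱 n)
section AuxPick

variable {α : Type*}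

/-- Auxiliary: recursively chosen list of distinct elements, the `m`-th chosen
from `A (Nat.unpair m).1`. -/
noncomputable def chooseSeqList (A : ℕ → Set α) (hA : ∀ n, (A n).Infinite) : ℕ → List α
  | 0 => []
  | m+1 => chooseSeqList A hA m ++
      [((hA (Nat.unpair m).1).diff (chooseSeqList A hA m).finite_toSet).nonempty.some]

/-- The element chosen at step `m`. -/
noncomputable def pickElt (A : ℕ → Set α) (hA : ∀ n, (A n).Infinite) (m : ℕ) : α :=
  ((hA (Nat.unpair m).1).diff (chooseSeqList A hA m).finite_toSet).nonempty.some

lemma chooseSeqList_succ (A : ℕ → Set α) (hA : ∀ n, (A n).Infinite) (m : ℕ) :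
    chooseSeqList A hA (m+1) = chooseSeqList A hA m ++ [pickElt A hA m] := rfl

lemma pickElt_mem (A : ℕ → Set α) (hA : ∀ n, (A n).Infinite) (m : ℕ) :
    pickElt A hA m ∈ A (Nat.unpair m).1 :=
  (((hA (Nat.unpair m).1).diff (chooseSeqList A hA m).finite_toSet).nonempty.some_mem).1

lemma pickElt_not_mem (A : ℕ → Set α) (hA : ∀ n, (A n).Infinite) (m : ℕ) :
    pickElt A hA m ∉ chooseSeqList A hA m :=
  (((hA (Nat.unpair m).1).diff (chooseSeqList A hA m).finite_toSet).nonempty.some_mem).2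

lemma pickElt_mem_chooseSeqList (A : ℕ → Set α) (hA : ∀ n, (A n).Infinite) :
    ∀ m j, j < m → pickElt A hA j ∈ chooseSeqList A hA m := by
  intro m
  induction m with
  | zero => intro j hj; omega
  | succ m ih =>
    intro j hj
    rw [chooseSeqList_succ]
    rcases Nat.lt_succ_iff_lt_or_eq.mp hj with h | h
    · exact List.mem_append_left _ (ih j h)
    · subst h; exact List.mem_append_right _ (List.mem_singleton.mpr rfl)

lemma pickElt_injective (A : ℕ → Set α) (hA : ∀ n, (A n).Infinite) :
    Function.Injective (pickElt A hA) := by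
  intro j m hjm
  by_contra hne
  rcases Nat.lt_or_ge j m with h | h
  · exact pickElt_not_mem A hA m (hjm ▸ pickElt_mem_chooseSeqList A hA m j h)
  · have h' : m < j := by omega
    exact pickElt_not_mem A hA j (hjm ▸ pickElt_mem_chooseSeqList A hA j m h')

end AuxPick

section AuxNhds

variable {X : Type*} [TopologicalSpace X]

lemma cp_basic_isOpen {F : Set X} (hF : F.Finite) {ε : ℝ} :
    IsOpen {f : Cp X | ∀ x ∈ F, |f.1 x| < ε} := by
  have : {f : Cp X | ∀ x ∈ F, |f.1 x| < ε} = ⋂ x ∈ F, {f : Cp X | |f.1 x| < ε} := by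
    ext f; simp
  rw [this]
  refine hF.isOpen_biInter fun x _ => ?_
  have hc : Continuous fun f : Cp X => |f.1 x| :=
    ((continuous_apply x).comp continuous_subtype_val).abs
  exact isOpen_Iio.preimage hc

lemma cp_basic_mem_nhds {F : Set X} (hF : F.Finite) {ε : ℝ} (hε : 0 < ε) :
    {f : Cp X | ∀ x ∈ F, |f.1 x| < ε} ∈ 𝓝 (zeroCp X) := by
  refine (cp_basic_isOpen hF).mem_nhds ?_
  intro x _
  simpa [zeroCp] using hε

lemma cp_nhds_basic {W : Set (Cp X)} (hW : W ∈ 𝓝 (zeroCp X)) :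
    ∃ (F : Set X) (ε : ℝ), F.Finite ∧ 0 < ε ∧
      {f : Cp X | ∀ x ∈ F, |f.1 x| < ε} ⊆ W := by
  rw [mem_nhds_induced Subtype.val (zeroCp X) W] at hW
  obtain ⟨t, ht, hts⟩ := hW
  rw [nhds_pi, Filter.mem_pi] at ht
  obtain ⟨I, hIfin, u, hu, hsub⟩ := ht
  have hu0 : ∀ x, ∃ δ > 0, Metric.ball (0:ℝ) δ ⊆ u x := by
    intro x
    have := hu x
    rw [Metric.mem_nhds_iff] at this
    exact this
  choose δ hδpos hδball using hu0
  rcases I.eq_empty_or_nonempty with hI | hI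
  · refine ⟨∅, 1, finite_empty, one_pos, ?_⟩
    intro f _
    apply hts
    apply hsub
    simp [hI]
  · classical
    set J := hIfin.toFinset with hJ
    have hJne : J.Nonempty := by
      rwa [hJ, Set.Finite.toFinset_nonempty]
    refine ⟨I, J.inf' hJne δ, hIfin, ?_, ?_⟩
    · rw [Finset.lt_inf'_iff]
      intro b hb
      exact hδpos b
    · intro f hf
      apply hts
      apply hsub
      intro x hx
      apply hδball x
      rw [Metric.mem_ball, Real.dist_eq, sub_zero]
      calc |f.1 x| < J.inf' hJne δ := hf x hx
        _ ≤ δ x := Finset.inf'_le _ (by rwa [hJ, Set.Finite.mem_toFinset])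

end AuxNhds

lemma exists_one_div_nat_lt {ε : ℝ} (hε : 0 < ε) : ∃ N : ℕ, 1/((N:ℝ)+1) < ε := by
  obtain ⟨N, hN⟩ := exists_nat_gt (1/ε)
  refine ⟨N, ?_⟩
  rw [div_lt_iff₀ (by positivity)]
  have := (div_lt_iff₀ hε).mp (hN.trans (lt_add_one _))
  nlinarith


/-- If `X` satisfies `S_fin(Γ_F, Ω^gr)` then `C_p(X)` satisfies
`S_fin(Γ_𝟎, wΓ_𝟎)`. -/
theorem Sfin_X_implies_Sfin_Cp (X : Type*) [TopologicalSpace X] [T35Space X]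
    (h : SfinGammaFOmegaGr X) : SfinGammaWGamma (zeroCp X) := by
  classical
  intro A hA
  have hAinf : ∀ n, (A n).Infinite := fun n => (hA n).1
  set c : ℕ → ℕ → Cp X := fun n k => pickElt A hAinf (Nat.pair n k) with hc
  set A' : ℕ → Set (Cp X) := fun n => Set.range (c n) with hA'def
  have hsub : ∀ n, A' n ⊆ A n := by
    rintro n f ⟨k, rfl⟩
    have := pickElt_mem A hAinf (Nat.pair n k)
    simpa [c, Nat.unpair_pair] using this
  have hcinj : ∀ n k n' k', c n k = c n' k' → n = n' ∧ k = k' := by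
    intro n k n' k' hh
    have := pickElt_injective A hAinf hh
    exact Nat.pair_eq_pair.mp this
  have hA'inf : ∀ n, (A' n).Infinite := by
    intro n
    apply Set.infinite_range_of_injective
    intro k l hkl
    exact (hcinj n k n l hkl).2
  have hA'disj : ∀ n m, n ≠ m → Disjoint (A' n) (A' m) := by
    intro n m hnm
    rw [Set.disjoint_left]
    rintro f ⟨k, rfl⟩ ⟨l, hl⟩
    exact hnm ((hcinj m l n k hl).1).symm
  have hA'conv : ∀ n, ∀ W ∈ 𝓝 (zeroCp X), (A' n \ W).Finite := by
    intro n W hW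
    exact ((hA n).2.2 W hW).subset (diff_subset_diff_left (hsub n))
  set D : ℕ → Set (Cp X) :=
    fun n => {f ∈ A' n | ∀ x, |f.1 x| < 1/((n:ℝ)+1)} with hD
  by_cases hcase : {n | (D n).Nonempty}.Infinite
  · -- CASE A
    haveI : Infinite ↥{n | (D n).Nonempty} := hcase.to_subtype
    set ν : ℕ ↪o ℕ := Nat.orderEmbeddingOfSet {n | (D n).Nonempty} with hν
    have hνmem : ∀ i, (D (ν i)).Nonempty := by
      intro i
      have : ν i ∈ {n | (D n).Nonempty} := by
        rw [← Nat.orderEmbeddingOfSet_range {n | (D n).Nonempty}]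
        exact Set.mem_range_self i
      exact this
    have hνinj : Function.Injective ν := ν.injective
    have hle : ∀ i, i ≤ ν i := fun i => ν.strictMono.le_apply
    set f : ℕ → Cp X := fun i => (hνmem i).some with hf
    have hfD : ∀ i, f i ∈ D (ν i) := fun i => (hνmem i).some_mem
    have hfA' : ∀ i, f i ∈ A' (ν i) := fun i => (hfD i).1
    have hfsmall : ∀ i x, |(f i).1 x| < 1/((ν i : ℝ)+1) := fun i => (hfD i).2
    have hfinj : ∀ i j, f i = f j → i = j := by
      intro i j hij
      by_contra hne
      have hd := hA'disj (ν i) (ν j) (fun hh => hne (hνinj hh))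
      exact (Set.disjoint_left.mp hd (hfA' i)) (hij ▸ hfA' j)
    refine ⟨fun q => {g | ∃ i, ν i = q ∧ g = f i}, ?_, ?_⟩
    · intro q
      constructor
      · rintro g ⟨i, rfl, rfl⟩; exact hsub _ (hfA' i)
      · apply Set.Subsingleton.finite
        rintro g ⟨i, hi, rfl⟩ g' ⟨j, hj, rfl⟩
        have : i = j := hνinj (hi.trans hj.symm)
        rw [this]
    · refine ⟨fun i => {f i}, fun i => ⟨finite_singleton _, singleton_nonempty _⟩,
        ?_, ?_, ?_⟩
      · ext g
        simp only [mem_iUnion, mem_singleton_iff, mem_setOf_eq]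
        constructor
        · rintro ⟨i, rfl⟩; exact ⟨ν i, i, rfl, rfl⟩
        · rintro ⟨q, i, hq, rfl⟩; exact ⟨i, rfl⟩
      · intro i j hij
        rw [Set.disjoint_singleton]
        exact fun hh => hij (hfinj _ _ hh)
      · intro W hW
        obtain ⟨F, ε, hF, hε, hbasic⟩ := cp_nhds_basic hW
        refine ⟨f, fun i => mem_singleton _, ?_⟩
        obtain ⟨I, hI⟩ := exists_nat_gt (1/ε)
        rw [eventually_atTop]
        refine ⟨I, fun i hi => ?_⟩
        apply hbasic
        intro x _
        have h1 : (0:ℝ) < (I:ℝ)+1 := by positivity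
        have h2 : ((I:ℝ)+1) ≤ ((ν i : ℝ)+1) := by
          have : I ≤ ν i := le_trans hi (hle i)
          exact_mod_cast Nat.succ_le_succ this
        calc |(f i).1 x| < 1/((ν i : ℝ)+1) := hfsmall i x
          _ ≤ 1/((I:ℝ)+1) := one_div_le_one_div_of_le h1 h2
          _ < ε := by
              rw [div_lt_iff₀ h1]
              have := (div_lt_iff₀ hε).mp (hI.trans (lt_add_one _))
              nlinarith
  · -- CASE B
    rw [Set.not_infinite] at hcase
    obtain ⟨b, hb⟩ := hcase.bddAbove
    set N₀ := b + 1 with hN₀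
    have hDempty : ∀ n, N₀ ≤ n → D n = ∅ := by
      intro n hn
      rw [Set.eq_empty_iff_forall_notMem]
      intro g hg
      have h1 : n ∈ {n | (D n).Nonempty} := ⟨g, hg⟩
      have h2 := hb h1
      omega
    set r : ℕ → ℝ := fun q => 1/((q:ℝ)+1) with hr
    have hrpos : ∀ q, 0 < r q := fun q => by simp only [hr]; positivity
    have hrmono : ∀ p q, p ≤ q → r q ≤ r p := by
      intro p q hpq
      simp only [hr]
      apply one_div_le_one_div_of_le (by positivity)
      have : (p:ℝ) ≤ (q:ℝ) := by exact_mod_cast hpq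
      linarith
    have hrlt : ∀ q, r (q+1) < r q := by
      intro q
      simp only [hr]
      apply one_div_lt_one_div_of_lt (by positivity)
      push_cast
      linarith
    set Ufun : ℕ → Cp X → Set X := fun n f => {x | |f.1 x| < r (n + N₀)} with hUfun
    set 𝒰 : ℕ → Set (Set X) := fun n => Ufun n '' A' (n + N₀) with h𝒰
    have hnotuniv : ∀ n, ∀ f ∈ A' (n + N₀), ∃ x, ¬ |f.1 x| < r (n + N₀) := by
      intro n f hf
      by_contra hcon
      push_neg at hcon
      have hfD : f ∈ D (n + N₀) := ⟨hf, fun x => lt_of_lt_of_le (hcon x) le_rfl⟩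
      rw [hDempty (n + N₀) (by omega)] at hfD
      exact hfD
    have hsecex : ∀ n, ∀ V ∈ 𝒰 n, ∃ f, f ∈ A' (n + N₀) ∧ Ufun n f = V := by
      rintro n V ⟨f, hf, rfl⟩
      exact ⟨f, hf, rfl⟩
    haveI : Nonempty (Cp X) := ⟨zeroCp X⟩
    have hXne : Nonempty X := by
      obtain ⟨f, hf⟩ := (hA'inf (0 + N₀)).nonempty
      obtain ⟨x, -⟩ := hnotuniv 0 f hf
      exact ⟨x⟩
    choose! sec hsecmem hsecU using hsecex
    have hsecinj : ∀ n, Set.InjOn (sec n) (𝒰 n) := by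
      intro n V hV V' hV' hVV'
      rw [← hsecU n V hV, ← hsecU n V' hV', hVV']
    -- γ-cover : per-point finiteness
    have hpt : ∀ n (x : X), {V ∈ 𝒰 n | x ∉ V}.Finite := by
      intro n x
      have hWx := cp_basic_mem_nhds (X := X) (finite_singleton x) (hrpos (n + N₀))
      have hfin := hA'conv (n + N₀) _ hWx
      have hss : {V ∈ 𝒰 n | x ∉ V} ⊆ Ufun n ''
          (A' (n + N₀) \ {f : Cp X | ∀ y ∈ ({x} : Set X), |f.1 y| < r (n + N₀)}) := by
        rintro V ⟨⟨f, hf, rfl⟩, hxV⟩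
        refine ⟨f, ⟨hf, fun hcon => hxV (hcon x (mem_singleton x))⟩, rfl⟩
      exact (hfin.image _).subset hss
    -- γ-cover : infinite
    have h𝒰inf : ∀ n, (𝒰 n).Infinite := by
      intro n
      by_contra hfin
      rw [Set.not_infinite] at hfin
      have hex : ∀ V ∈ 𝒰 n, ∃ x, x ∉ V := by
        rintro V ⟨f, hf, rfl⟩
        exact hnotuniv n f hf
      choose! xt hxt using hex
      have hWF := cp_basic_mem_nhds (X := X) (hfin.image xt) (hrpos (n + N₀))
      have hAfin := hA'conv (n + N₀) _ hWF
      have hss : A' (n + N₀) ⊆ A' (n + N₀) \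
          {f : Cp X | ∀ y ∈ xt '' 𝒰 n, |f.1 y| < r (n + N₀)} := by
        intro f hf
        refine ⟨hf, fun hcon => ?_⟩
        have hV : Ufun n f ∈ 𝒰 n := ⟨f, hf, rfl⟩
        exact hxt _ hV (hcon (xt (Ufun n f)) (mem_image_of_mem xt hV))
      exact hA'inf (n + N₀) (hAfin.subset hss)
    -- cozero
    have hcoz : ∀ n, ∀ V ∈ 𝒰 n, IsCozero V := by
      rintro n V ⟨f, hf, rfl⟩
      refine ⟨fun x => max (r (n + N₀) - |f.1 x|) 0,
        (continuous_const.sub f.2.abs).max continuous_const, ?_⟩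
      ext x
      simp only [hUfun, mem_setOf_eq, mem_preimage, mem_compl_iff, mem_singleton_iff]
      constructor
      · intro hlt hmax
        rw [max_eq_left (by linarith)] at hmax
        linarith
      · intro hne
        by_contra hge
        push_neg at hge
        exact hne (max_eq_right (by linarith))
    -- the zero-set shrinking
    set Zfun : ℕ → Cp X → Set X := fun n f => {x | |f.1 x| ≤ r (n + N₀ + 1)} with hZfun
    set Fsh : ℕ → Set X → Set X := fun n V => Zfun n (sec n V) with hFsh
    have hFsub : ∀ n, ∀ V ∈ 𝒰 n, Fsh n V ⊆ V := by
      intro n V hV x hx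
      rw [← hsecU n V hV]
      exact lt_of_le_of_lt hx (hrlt (n + N₀))
    have hFzero : ∀ n, ∀ V ∈ 𝒰 n, IsZeroSet (Fsh n V) := by
      intro n V hV
      refine ⟨fun x => max (|(sec n V).1 x| - r (n + N₀ + 1)) 0,
        ((sec n V).2.abs.sub continuous_const).max continuous_const, ?_⟩
      ext x
      simp only [hFsh, hZfun, mem_setOf_eq, mem_preimage, mem_singleton_iff]
      rw [max_eq_right_iff, sub_nonpos]
    have hFinf : ∀ n, ((Fsh n) '' 𝒰 n).Infinite := by
      intro n
      by_contra hfin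
      rw [Set.not_infinite] at hfin
      have hex : ∀ Z ∈ Fsh n '' 𝒰 n, ∃ x, x ∉ Z := by
        rintro Z ⟨V, hV, rfl⟩
        obtain ⟨f, hf, hfV⟩ := hV
        obtain ⟨x, hx⟩ := hnotuniv n (sec n V) (hsecmem n V ⟨f, hf, hfV⟩)
        refine ⟨x, fun hc => hx ?_⟩
        have := hFsub n V ⟨f, hf, hfV⟩ hc
        rw [← hsecU n V ⟨f, hf, hfV⟩] at this
        exact this
      choose! xz hxz using hex
      have hWF := cp_basic_mem_nhds (X := X) ((hfin.image xz)) (hrpos (n + N₀ + 1))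
      have hAfin := hA'conv (n + N₀) _ hWF
      have hss : sec n '' 𝒰 n ⊆ A' (n + N₀) \
          {f : Cp X | ∀ y ∈ xz '' (Fsh n '' 𝒰 n), |f.1 y| < r (n + N₀ + 1)} := by
        rintro f ⟨V, hV, rfl⟩
        refine ⟨hsecmem n V hV, fun hcon => ?_⟩
        have hZ : Fsh n V ∈ Fsh n '' 𝒰 n := mem_image_of_mem _ hV
        have h1 := hxz _ hZ
        have h2 := hcon (xz (Fsh n V)) (mem_image_of_mem xz hZ)
        exact h1 (le_of_lt h2)
      have hsecfin : (sec n '' 𝒰 n).Finite := hAfin.subset hss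
      have h𝒰ss : 𝒰 n ⊆ Ufun n '' (sec n '' 𝒰 n) := by
        intro V hV
        exact ⟨sec n V, mem_image_of_mem _ hV, hsecU n V hV⟩
      exact h𝒰inf n ((hsecfin.image _).subset h𝒰ss)
    have hFpt : ∀ n (x : X), {V ∈ 𝒰 n | x ∉ Fsh n V}.Finite := by
      intro n x
      have hWx := cp_basic_mem_nhds (X := X) (finite_singleton x) (hrpos (n + N₀ + 1))
      have hAfin := hA'conv (n + N₀) _ hWx
      have hss : sec n '' {V ∈ 𝒰 n | x ∉ Fsh n V} ⊆ A' (n + N₀) \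
          {f : Cp X | ∀ y ∈ ({x} : Set X), |f.1 y| < r (n + N₀ + 1)} := by
        rintro f ⟨V, ⟨hV, hxV⟩, rfl⟩
        refine ⟨hsecmem n V hV, fun hcon => hxV ?_⟩
        exact le_of_lt (hcon x (mem_singleton x))
      refine Set.Finite.of_finite_image (hAfin.subset hss) ?_
      exact (hsecinj n).mono (sep_subset _ _)
    have hGamma : ∀ n, GammaFShrinkable (𝒰 n) := by
      intro n
      refine ⟨(Set.countable_range (c (n + N₀))).image _, hcoz n, ⟨h𝒰inf n, hpt n⟩,
        Fsh n, fun V hV => ⟨hFzero n V hV, hFsub n V hV⟩, hFinf n, hFpt n⟩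
    obtain ⟨𝒱, h𝒱, hOG⟩ := h 𝒰 hGamma
    obtain ⟨-, -, P, hPfn, hPU, hPdisj, hPgr⟩ := hOG
    set 𝒲 : Set (Set X) := ⋃ n, 𝒱 n with h𝒲
    set νk : Set X → ℕ := fun V => if hh : ∃ n, V ∈ 𝒱 n then Nat.find hh else 0 with hνk
    set φ : Set X → Cp X := fun V => sec (νk V) V with hφ
    have hmem𝒲 : ∀ V ∈ 𝒲, ∃ n, V ∈ 𝒱 n := fun V hV => mem_iUnion.mp hV
    have hνspec : ∀ V ∈ 𝒲, V ∈ 𝒱 (νk V) := by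
      intro V hV
      obtain hh := hmem𝒲 V hV
      have he : νk V = Nat.find hh := dif_pos hh
      rw [he]
      exact Nat.find_spec hh
    have hV𝒰 : ∀ V ∈ 𝒲, V ∈ 𝒰 (νk V) := fun V hV => (h𝒱 (νk V)).1 (hνspec V hV)
    have hφA' : ∀ V ∈ 𝒲, φ V ∈ A' (νk V + N₀) := fun V hV => hsecmem _ _ (hV𝒰 V hV)
    have hφU : ∀ V ∈ 𝒲, Ufun (νk V) (φ V) = V := fun V hV => hsecU _ _ (hV𝒰 V hV)
    have hφinj : ∀ V ∈ 𝒲, ∀ V' ∈ 𝒲, φ V = φ V' → V = V' := by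
      intro V hV V' hV' he
      have h1 := hφA' V hV
      have h2 := hφA' V' hV'
      have hnn : νk V = νk V' := by
        by_contra hne
        have hd := hA'disj (νk V + N₀) (νk V' + N₀) (by omega)
        rw [he] at h1
        exact (Set.disjoint_left.mp hd h1) h2
      rw [← hφU V hV, ← hφU V' hV', he, hnn]
    refine ⟨fun q => if hq : N₀ ≤ q then φ '' {V ∈ 𝒱 (q - N₀) | νk V = q - N₀} else ∅,
      ?_, ?_⟩
    · intro q
      by_cases hq : N₀ ≤ q
      · simp only [dif_pos hq]
        constructor
        · rintro g ⟨V, ⟨hV1, hV2⟩, rfl⟩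
          have hV𝒲 : V ∈ 𝒲 := mem_iUnion.mpr ⟨q - N₀, hV1⟩
          have := hφA' V hV𝒲
          rw [hV2] at this
          have hq2 : q - N₀ + N₀ = q := by omega
          rw [hq2] at this
          exact hsub q this
        · exact ((h𝒱 (q - N₀)).2.subset (sep_subset _ _)).image _
      · simp only [dif_neg hq]
        exact ⟨empty_subset _, finite_empty⟩
    · have hBU : (⋃ q, (if hq : N₀ ≤ q then φ '' {V ∈ 𝒱 (q - N₀) | νk V = q - N₀}
          else ∅)) = φ '' 𝒲 := by
        apply Set.Subset.antisymm
        · intro g hg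
          obtain ⟨q, hq⟩ := mem_iUnion.mp hg
          by_cases hq' : N₀ ≤ q
          · simp only [dif_pos hq'] at hq
            obtain ⟨V, ⟨hV1, _⟩, rfl⟩ := hq
            exact mem_image_of_mem φ (mem_iUnion.mpr ⟨q - N₀, hV1⟩)
          · simp only [dif_neg hq'] at hq
            exact absurd hq (notMem_empty g)
        · rintro g ⟨V, hV, rfl⟩
          refine mem_iUnion.mpr ⟨νk V + N₀, ?_⟩
          rw [dif_pos (by omega : N₀ ≤ νk V + N₀)]
          have hq2 : νk V + N₀ - N₀ = νk V := by omega
          rw [hq2]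
          exact mem_image_of_mem φ ⟨hνspec V hV, rfl⟩
      rw [hBU]
      have hPsub : ∀ k, P k ⊆ 𝒲 := by
        intro k
        rw [← hPU]
        exact subset_iUnion P k
      refine ⟨fun k => φ '' P k,
        fun k => ⟨(hPfn k).1.image _, (hPfn k).2.image _⟩, ?_, ?_, ?_⟩
      · rw [← image_iUnion, hPU]
      · intro k l hkl
        rw [Set.disjoint_left]
        rintro g ⟨V, hV, rfl⟩ ⟨V', hV', he⟩
        have := hφinj V' (hPsub l hV') V (hPsub k hV) he
        subst this
        exact (Set.disjoint_left.mp (hPdisj k l hkl) hV) hV'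
      · intro W hW
        obtain ⟨F, ε, hF, hε, hbasic⟩ := cp_nhds_basic hW
        obtain ⟨N, hN⟩ := exists_one_div_nat_lt hε
        set T : Set (Set X) := ⋃ n ∈ Iic N, 𝒱 n with hT
        have hTfin : T.Finite := Set.Finite.biUnion (finite_Iic N) (fun n _ => (h𝒱 n).2)
        set bad : Set ℕ := {k | ∃ V, V ∈ P k ∩ T} with hbad
        have hbadfin : bad.Finite := by
          have hexV : ∀ k ∈ bad, ∃ V, V ∈ P k ∩ T := fun k hk => hk
          choose! gV hgV using hexV
          apply Set.Finite.of_finite_image (f := gV)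
          · apply hTfin.subset
            rintro V ⟨k, hk, rfl⟩
            exact (hgV k hk).2
          · intro k hk l hl hkl
            by_contra hne
            have h1 := (hgV k hk).1
            have h2 := (hgV l hl).1
            rw [hkl] at h1
            exact (Set.disjoint_left.mp (hPdisj k l hne) h1) h2
        have hev1 : ∀ᶠ k in atTop, k ∉ bad := by
          rw [← Nat.cofinite_eq_atTop]
          exact Set.Finite.eventually_cofinite_notMem hbadfin
        have hev2 := hPgr F hF
        refine ⟨fun k => if hk : (φ '' P k ∩ W).Nonempty then hk.some
          else ((hPfn k).2.image φ).some, ?_, ?_⟩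
        · intro k
          by_cases hk : (φ '' P k ∩ W).Nonempty
          · simp only [dif_pos hk]
            exact hk.some_mem.1
          · simp only [dif_neg hk]
            exact ((hPfn k).2.image φ).some_mem
        · filter_upwards [hev1, hev2] with k hk1 hk2
          obtain ⟨U, hUP, hUF⟩ := hk2
          have hU𝒲 : U ∈ 𝒲 := hPsub k hUP
          have hUT : U ∉ T := fun hT' => hk1 ⟨U, hUP, hT'⟩
          have hνN : N < νk U := by
            by_contra hle
            push_neg at hle
            exact hUT (mem_biUnion (mem_Iic.mpr hle) (hνspec U hU𝒲))
          have hφW : φ U ∈ W := by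
            apply hbasic
            intro x hx
            have hxU : x ∈ U := hUF hx
            rw [← hφU U hU𝒲] at hxU
            have hlt : |(φ U).1 x| < r (νk U + N₀) := hxU
            have h2 : r (νk U + N₀) ≤ r N := hrmono N (νk U + N₀) (by omega)
            exact lt_of_lt_of_le hlt (le_of_lt (lt_of_le_of_lt h2 hN))
          have hne : (φ '' P k ∩ W).Nonempty := ⟨φ U, mem_image_of_mem φ hUP, hφW⟩
          simp only [dif_pos hne]
          exact hne.some_mem.2
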